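/- Let (M,g) be a smooth Riemannian manifold, T a smooth 3-form, ∇^T the metric connection with totally skew-symmetric torsion T, ξ a Killing vector field of unit length with dual 1-form η = g(ξ,−), and Φ the (1,1)-tensor field defined by Φ(X) = ∇^T_X ξ. Then the condition ∇^T_X (d^T η) = −2 X♭ ∧ η for all vector fields X holds if and only if (∇^T_X Φ)(Y) = g(ξ,Y) X − g(X,Y) ξ for all vector fields X and Y. -/

import Mathlib

/-- An abstract model of a smooth Riemannian manifold `(M,g)`: `C` is the algebra of
smooth real-valued functions on `M` and `V` is the `C`-module of smooth vector fields,
together with the directional-derivative action `act` of vector fields on functions,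
the Lie bracket of vector fields, and the Riemannian metric `g`. -/
structure VFCalc (C V : Type) [CommRing C] [Algebra ℝ C]
    [AddCommGroup V] [Module C V] : Type where
  /-- the derivative `X f` of a function `f` along a vector field `X` -/
  act : V → C → C
  /-- the Lie bracket `[X, Y]` of vector fields -/
  bracket : V → V → V
  /-- the Riemannian metric `g(X, Y)` -/
  g : V → V → C
  act_mul : ∀ X f₁ f₂, act X (f₁ * f₂) = act X f₁ * f₂ + f₁ * act X f₂
  act_addF : ∀ X f₁ f₂, act X (f₁ + f₂) = act X f₁ + act X f₂
  act_const : ∀ X (a : ℝ), act X (algebraMap ℝ C a) = 0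
  act_addV : ∀ X Y f, act (X + Y) f = act X f + act Y f
  act_smulV : ∀ (f : C) (X : V) (h : C), act (f • X) h = f * act X h
  bracket_antisymm : ∀ X Y, bracket X Y = -bracket Y X
  bracket_addL : ∀ X Y Z, bracket (X + Y) Z = bracket X Z + bracket Y Z
  bracket_leibniz : ∀ X (f : C) Y, bracket X (f • Y) = act X f • Y + f • bracket X Y
  bracket_act : ∀ X Y f, act (bracket X Y) f = act X (act Y f) - act Y (act X f)
  bracket_jacobi : ∀ X Y Z,
    bracket X (bracket Y Z) + bracket Y (bracket Z X) + bracket Z (bracket X Y) = 0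
  g_symm : ∀ X Y, g X Y = g Y X
  g_addL : ∀ X X' Y, g (X + X') Y = g X Y + g X' Y
  g_smulL : ∀ (f : C) X Y, g (f • X) Y = f * g X Y
  g_nondeg : ∀ X, (∀ Z, g X Z = 0) → X = 0

/-- `T` is a 3-form: `C`-multilinear and totally skew-symmetric. -/
def VFCalc.IsThreeForm {C V : Type} [CommRing C] [Algebra ℝ C]
    [AddCommGroup V] [Module C V] (_D : VFCalc C V) (T : V → V → V → C) : Prop :=
  (∀ X X' Y Z, T (X + X') Y Z = T X Y Z + T X' Y Z) ∧
  (∀ (f : C) X Y Z, T (f • X) Y Z = f * T X Y Z) ∧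
  (∀ X Y Z, T X Y Z = -T Y X Z) ∧
  (∀ X Y Z, T X Y Z = -T X Z Y)

namespace VFCalc

variable {C V : Type} [CommRing C] [Algebra ℝ C] [AddCommGroup V] [Module C V]
variable (D : VFCalc C V)

/-- `nab` is an affine connection on vector fields. -/
def IsConnection (nab : V → V → V) : Prop :=
  (∀ X X' Y, nab (X + X') Y = nab X Y + nab X' Y) ∧
  (∀ (f : C) X Y, nab (f • X) Y = f • nab X Y) ∧
  (∀ X Y Y', nab X (Y + Y') = nab X Y + nab X Y') ∧
  (∀ X (f : C) Y, nab X (f • Y) = D.act X f • Y + f • nab X Y)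

/-- `nab` is the Levi-Civita connection of `g`: a torsion-free metric connection. -/
def IsLeviCivita (nab : V → V → V) : Prop :=
  D.IsConnection nab ∧
  (∀ X Y Z, D.act X (D.g Y Z) = D.g (nab X Y) Z + D.g Y (nab X Z)) ∧
  (∀ X Y, nab X Y - nab Y X = D.bracket X Y)

/-- `nabT` is the metric connection with totally skew-symmetric torsion `T`:
`g(∇ᵀ_X Y, Z) = g(∇ᵍ_X Y, Z) + (1/2) T(X,Y,Z)` where `nabG` is the Levi-Civita
connection. -/
def IsTorsionConnection (T : V → V → V → C) (nabG nabT : V → V → V) : Prop :=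
  D.IsConnection nabT ∧
  ∀ X Y Z, D.g (nabT X Y) Z = D.g (nabG X Y) Z + (1 / 2 : ℝ) • T X Y Z

/-- `ξ` is a Killing vector field: the Lie derivative of the metric along `ξ`
vanishes. -/
def IsKilling (ξ : V) : Prop :=
  ∀ X Y, D.act ξ (D.g X Y) = D.g (D.bracket ξ X) Y + D.g X (D.bracket ξ Y)

/-- `e` is a (global) orthonormal frame of vector fields. -/
def IsOrthonormalFrame {ι : Type} [Fintype ι] [DecidableEq ι] (e : ι → V) : Prop :=
  (∀ a b, D.g (e a) (e b) = if a = b then 1 else 0) ∧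
  (∀ X, X = ∑ a, D.g X (e a) • e a)

/-- the exterior derivative of a 1-form -/
def dOne (η : V → C) (X Y : V) : C :=
  D.act X (η Y) - D.act Y (η X) - η (D.bracket X Y)

/-- the exterior derivative of a 2-form -/
def dTwoForm (ω : V → V → C) (X Y Z : V) : C :=
  D.act X (ω Y Z) - D.act Y (ω X Z) + D.act Z (ω X Y)
    - ω (D.bracket X Y) Z + ω (D.bracket X Z) Y - ω (D.bracket Y Z) X

/-- the torsion exterior derivative `dᵀη = dη − Σ_a (e_a ⌟ T) ∧ (e_a ⌟ η)` of a
1-form `η`, relative to an orthonormal frame `e`. -/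
def dTOne {ι : Type} [Fintype ι] (e : ι → V) (T : V → V → V → C) (η : V → C)
    (X Y : V) : C :=
  D.dOne η X Y - ∑ a, η (e a) * T (e a) X Y

/-- the covariant derivative `(∇_X η)(Y)` of a 1-form -/
def covOne (nab : V → V → V) (η : V → C) (X Y : V) : C :=
  D.act X (η Y) - η (nab X Y)

/-- the covariant derivative `(∇_X ω)(Y,Z)` of a 2-form -/
def covTwo (nab : V → V → V) (ω : V → V → C) (X Y Z : V) : C :=
  D.act X (ω Y Z) - ω (nab X Y) Z - ω Y (nab X Z)

/-- the curvature operator `R(X,Y)Z = ∇_X∇_Y Z − ∇_Y∇_X Z − ∇_{[X,Y]} Z` -/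
def curv (nab : V → V → V) (X Y Z : V) : V :=
  nab X (nab Y Z) - nab Y (nab X Z) - nab (D.bracket X Y) Z

end VFCalc

/-- Auxiliary: a `C`-linear functional applied to a finite linear combination. -/
lemma vfcalc_sum_aux {C V ι : Type} [CommRing C] [AddCommGroup V] [Module C V]
    [Fintype ι] (F : V → C)
    (hadd : ∀ X X', F (X + X') = F X + F X')
    (hsmul : ∀ (f : C) (X : V), F (f • X) = f * F X)
    (c : ι → C) (v : ι → V) :
    F (∑ a, c a • v a) = ∑ a, c a * F (v a) := by
  classical
  have h0 : F 0 = 0 := by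
    have := hsmul 0 0
    simpa using this
  suffices h : ∀ s : Finset ι, F (∑ a ∈ s, c a • v a) = ∑ a ∈ s, c a * F (v a) from
    h Finset.univ
  intro s
  induction s using Finset.induction_on with
  | empty => simpa using h0
  | insert _ _ hx ih =>
    rw [Finset.sum_insert hx, Finset.sum_insert hx, hadd, hsmul, ih]

/-- For a unit-length Killing vector field `ξ` with dual 1-form
`η = g(ξ,−)` and `Φ(X) = ∇ᵀ_X ξ`, the condition `∇ᵀ_X (dᵀη) = −2 X♭ ∧ η` (for all `X`)
holds if and only if `(∇ᵀ_X Φ)(Y) = g(ξ,Y) X − g(X,Y) ξ` (for all `X`, `Y`). -/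
theorem statement1 {C V : Type} [CommRing C] [Algebra ℝ C]
    [AddCommGroup V] [Module C V] (D : VFCalc C V)
    (T : V → V → V → C) (hT : D.IsThreeForm T)
    (nabG nabT : V → V → V) (hLC : D.IsLeviCivita nabG)
    (hTC : D.IsTorsionConnection T nabG nabT)
    {ι : Type} [Fintype ι] [DecidableEq ι] (e : ι → V)
    (he : D.IsOrthonormalFrame e)
    (ξ : V) (hK : D.IsKilling ξ) (hunit : D.g ξ ξ = 1)
    (η : V → C) (hη : ∀ X, η X = D.g ξ X)
    (Φ : V → V) (hΦ : ∀ X, Φ X = nabT X ξ) :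
    (∀ X Y Z, D.covTwo nabT (D.dTOne e T η) X Y Z
        = -(2 : ℝ) • (D.g X Y * η Z - D.g X Z * η Y))
      ↔ (∀ X Y, nabT X (Φ Y) - Φ (nabT X Y) = D.g ξ Y • X - D.g X Y • ξ) := by
  obtain ⟨hTadd, hTsmul, hT12, hT23⟩ := hT
  obtain ⟨⟨hGa, hGs, hGb, hGl⟩, hGm, hGt⟩ := hLC
  obtain ⟨⟨hNa, hNs, hNb, hNl⟩, hNg⟩ := hTC
  obtain ⟨he1, he2⟩ := he
  -- the "half" element of C
  set hf : C := algebraMap ℝ C (1 / 2 : ℝ) with hfdef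
  have hh : 2 * hf = 1 := by
    rw [hfdef, show (2 : C) = algebraMap ℝ C (2 : ℝ) from (map_ofNat _ 2).symm,
      ← map_mul]
    norm_num
  have hNg' : ∀ X Y Z, D.g (nabT X Y) Z = D.g (nabG X Y) Z + hf * T X Y Z := by
    intro X Y Z
    rw [hNg X Y Z, Algebra.smul_def, hfdef]
  -- linearity of g in both slots, sub versions
  have g_subL : ∀ X X' Y, D.g (X - X') Y = D.g X Y - D.g X' Y := by
    intro X X' Y
    rw [sub_eq_add_neg, D.g_addL, ← neg_one_smul C X', D.g_smulL]
    ring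
  have g_sub2 : ∀ X Y Y', D.g X (Y - Y') = D.g X Y - D.g X Y' := by
    intro X Y Y'
    rw [D.g_symm, g_subL, D.g_symm Y X, D.g_symm Y' X]
  -- act of 2 * f
  have act2 : ∀ X (c : C), D.act X (2 * c) = 2 * D.act X c := by
    intro X c
    rw [show (2 : C) = algebraMap ℝ C (2 : ℝ) from (map_ofNat _ 2).symm,
      D.act_mul, D.act_const]
    ring
  -- cancellation of 2 in C
  have twoCancel : ∀ a b : C, 2 * a = 2 * b → a = b := by
    intro a b hab
    linear_combination hf * hab - (a - b) * hh
  -- frame sum identity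
  have sumT : ∀ X Y, (∑ a, η (e a) * T (e a) X Y) = T ξ X Y := by
    intro X Y
    have hlin := vfcalc_sum_aux (fun W => T W X Y)
      (fun W W' => hTadd W W' X Y) (fun f W => hTsmul f W X Y)
      (fun a => D.g ξ (e a)) e
    simp only [hη]
    conv_rhs => rw [he2 ξ]
    rw [hlin]
  -- skewness of g(∇ᵍ_X ξ, Y) from the Killing equation
  have gK : ∀ X Y, D.g (nabG X ξ) Y + D.g (nabG Y ξ) X = 0 := by
    intro X Y
    have hA := hK X Y
    have hB := hGm ξ X Y
    have hC1 : D.g (D.bracket ξ X) Y = D.g (nabG ξ X) Y - D.g (nabG X ξ) Y := by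
      rw [← hGt ξ X, g_subL]
    have hC2 : D.g X (D.bracket ξ Y) = D.g X (nabG ξ Y) - D.g X (nabG Y ξ) := by
      rw [← hGt ξ Y, g_sub2]
    have hD : D.g X (nabG Y ξ) = D.g (nabG Y ξ) X := D.g_symm X (nabG Y ξ)
    linear_combination hA - hB + hC1 + hC2 - hD
  -- skewness of g(∇ᵀ_X ξ, Y)
  have Kanti : ∀ X Y, D.g (nabT X ξ) Y + D.g (nabT Y ξ) X = 0 := by
    intro X Y
    have ts : T Y ξ X = -T X ξ Y := by
      rw [hT12 Y ξ X, hT23 ξ Y X, hT12 ξ X Y]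
      ring
    linear_combination gK X Y + hNg' X ξ Y + hNg' Y ξ X + hf * ts
  -- metricity of the torsion connection
  have nTmet : ∀ X Y Z, D.act X (D.g Y Z) = D.g (nabT X Y) Z + D.g Y (nabT X Z) := by
    intro X Y Z
    have h1 := hNg' X Y Z
    have h2 := hNg' X Z Y
    have h3 : D.g Y (nabT X Z) = D.g (nabT X Z) Y := D.g_symm _ _
    have h4 : D.g Y (nabG X Z) = D.g (nabG X Z) Y := D.g_symm _ _
    have h5 : T X Z Y = -T X Y Z := by rw [hT23 X Y Z]; ring
    linear_combination hGm X Y Z - h1 - h2 - h3 + h4 - hf * h5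
  -- the 2-form dᵀη equals 2 g(∇ᵀ_X ξ, Y)
  have dT2 : ∀ X Y, D.dTOne e T η X Y = 2 * D.g (nabT X ξ) Y := by
    intro X Y
    simp only [VFCalc.dTOne, VFCalc.dOne]
    rw [sumT X Y]
    simp only [hη]
    have h1 := nTmet X ξ Y
    have h2 := nTmet Y ξ X
    have htor : D.g (D.bracket X Y) ξ = D.g (nabG X Y) ξ - D.g (nabG Y X) ξ := by
      rw [← hGt X Y, g_subL]
    have h3 : D.g ξ (D.bracket X Y) = D.g (D.bracket X Y) ξ := D.g_symm _ _
    have h4 : D.g ξ (nabT X Y) = D.g (nabT X Y) ξ := D.g_symm _ _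
    have h5 : D.g ξ (nabT Y X) = D.g (nabT Y X) ξ := D.g_symm _ _
    have h6 := hNg' X Y ξ
    have h7 := hNg' Y X ξ
    have h8 : T Y X ξ = -T X Y ξ := by rw [hT12 Y X ξ]
    have h9 : T ξ X Y = T X Y ξ := by rw [hT12 ξ X Y, hT23 X ξ Y]; ring
    have h10 := Kanti X Y
    linear_combination h1 - h2 - h3 - htor + h4 - h5 + h6 - h7 - h10 -
      hf * h8 + T X Y ξ * hh - h9
  -- expansion of the covariant derivative of dᵀη
  have covEq : ∀ X Y Z, D.covTwo nabT (D.dTOne e T η) X Y Z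
      = 2 * D.g (nabT X (nabT Y ξ) - nabT (nabT X Y) ξ) Z := by
    intro X Y Z
    simp only [VFCalc.covTwo, dT2, act2]
    have h1 := nTmet X (nabT Y ξ) Z
    have h2 := g_subL (nabT X (nabT Y ξ)) (nabT (nabT X Y) ξ) Z
    linear_combination 2 * h1 - 2 * h2
  -- normalize the real scalar in the statement
  have smulR : ∀ c : C, -(2 : ℝ) • c = -(2 * c) := by
    intro c
    rw [neg_smul, Algebra.smul_def, map_ofNat]
  constructor
  · intro hcond X Y
    rw [hΦ, hΦ]
    have key : ∀ Z, D.g (nabT X (nabT Y ξ) - nabT (nabT X Y) ξ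
        - (D.g ξ Y • X - D.g X Y • ξ)) Z = 0 := by
      intro Z
      have h1 := hcond X Y Z
      rw [covEq X Y Z, smulR] at h1
      simp only [hη] at h1
      have h2 : D.g (nabT X (nabT Y ξ) - nabT (nabT X Y) ξ) Z
          = D.g ξ Y * D.g X Z - D.g X Y * D.g ξ Z := by
        apply twoCancel
        linear_combination h1
      rw [g_subL, h2, g_subL, D.g_smulL, D.g_smulL]
      ring
    have h0 := D.g_nondeg _ key
    exact sub_eq_zero.mp h0
  · intro hcond X Y Z
    rw [covEq X Y Z, smulR]
    have h1 := hcond X Y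
    rw [hΦ, hΦ] at h1
    rw [h1, g_subL, D.g_smulL, D.g_smulL]
    simp only [hη]
    ring
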